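/- Let k ≥ 2 and let θ, θ' be real numbers. Define v : Fin k → ℝ by v(0) = 1 − θ' − (k−2)θ, v(1) = θ', and v(i) = θ for 2 ≤ i ≤ k−1. Then (1 − kθ)·det(circulant(v)) = (1 − θ' − (k−1)θ)^k − (θ − θ')^k, where circulant(v) is the k×k circulant matrix generated by v. Equivalently, writing α = 1 − kθ and δ = θ' − θ, if α ≠ 0 then det(circulant(v)) = α^{k−1}·((1 − δ/α)^k − (−δ/α)^k). (This computes the determinant of the conditional PMF matrix of an edge in a perturbed symmetric graphical model, used in the sample complexity lower bound.) -/

import Mathlib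

open Matrix Equiv Fin.NatCast Fin.CommRing

/-- A permutation of `Fin (m+2)` moving every point by 0 or 1 (cyclically) is the
identity or the full rotation. -/
lemma perm_step_dichotomy (m : ℕ) (σ : Equiv.Perm (Fin (m + 2)))
    (h : ∀ i, σ i = i ∨ σ i = i + 1) : σ = 1 ∨ σ = finRotate (m + 2) := by
  by_cases h0 : ∃ i, σ i = i + 1
  · right
    obtain ⟨i₀, hi₀⟩ := h0
    have key : ∀ n : ℕ, σ (i₀ + (n : Fin (m + 2))) = i₀ + (n : Fin (m + 2)) + 1 := by
      intro n
      induction n with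
      | zero => simpa using hi₀
      | succ n ih =>
        set j := i₀ + (n : Fin (m + 2)) with hj
        have hcast : ((n + 1 : ℕ) : Fin (m + 2)) = (n : Fin (m + 2)) + 1 := by
          push_cast; ring
        rw [hcast, ← add_assoc, ← hj]
        rcases h (j + 1) with h1 | h1
        · exfalso
          have : σ (j + 1) = σ j := by rw [h1, ih]
          have hjj : j + 1 = j := σ.injective this
          have h10 : j + 1 = j + 0 := by simpa using hjj
          exact one_ne_zero (add_left_cancel h10)
        · exact h1
    refine Equiv.ext fun j => ?_
    have hj : i₀ + ((((j - i₀ : Fin (m + 2)) : ℕ) : Fin (m + 2))) = j := by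
      rw [Fin.cast_val_eq_self]; ring
    have := key ((j - i₀ : Fin (m + 2)) : ℕ)
    rw [hj] at this
    rw [this, finRotate_succ_apply]
  · left
    push_neg at h0
    refine Equiv.ext fun i => ?_
    rcases h i with h1 | h1
    · simpa using h1
    · exact absurd h1 (h0 i)

/-- Determinant of the circulant matrix of `(c, δ, 0, …, 0)`. -/
lemma det_circulant_step (m : ℕ) (c δ : ℝ) :
    (Matrix.circulant (fun i : Fin (m + 2) =>
      if i = 0 then c else if i = 1 then δ else 0)).det
      = c ^ (m + 2) - (-δ) ^ (m + 2) := by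
  set w : Fin (m + 2) → ℝ := fun i => if i = 0 then c else if i = 1 then δ else 0 with hw
  rw [Matrix.det_apply']
  have hrot : (finRotate (m + 2) : Equiv.Perm (Fin (m + 2))) ≠ 1 := by
    intro h
    have : (finRotate (m + 2)) 0 = 0 := by rw [h]; rfl
    rw [finRotate_succ_apply, zero_add] at this
    exact one_ne_zero this
  have hsub : ∑ σ : Equiv.Perm (Fin (m + 2)),
        ((Equiv.Perm.sign σ : ℤ) : ℝ) * ∏ i, Matrix.circulant w (σ i) i
      = ∑ σ ∈ ({1, finRotate (m + 2)} : Finset (Equiv.Perm (Fin (m + 2)))),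
        ((Equiv.Perm.sign σ : ℤ) : ℝ) * ∏ i, Matrix.circulant w (σ i) i := by
    refine (Finset.sum_subset (Finset.subset_univ _) ?_).symm
    intro σ _ hσ
    simp only [Finset.mem_insert, Finset.mem_singleton] at hσ
    push_neg at hσ
    have : ¬ ∀ i, σ i = i ∨ σ i = i + 1 := by
      intro hall
      rcases perm_step_dichotomy m σ hall with h | h
      · exact hσ.1 h
      · exact hσ.2 h
    push_neg at this
    obtain ⟨i, hi1, hi2⟩ := this
    have hzero : Matrix.circulant w (σ i) i = 0 := by
      rw [Matrix.circulant_apply, hw]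
      have h1 : σ i - i ≠ 0 := by
        rw [sub_ne_zero]; exact hi1
      have h2 : σ i - i ≠ 1 := by
        intro h
        apply hi2
        have h3 := sub_eq_iff_eq_add.mp h
        rw [h3]; exact add_comm 1 i
      simp [h1, h2]
    have hprod : ∏ x : Fin (m + 2), Matrix.circulant w (σ x) x = 0 :=
      Finset.prod_eq_zero (Finset.mem_univ i) hzero
    rw [hprod, mul_zero]
  rw [hsub, Finset.sum_insert (by simpa using hrot.symm), Finset.sum_singleton]
  have hid : ∏ i : Fin (m + 2), Matrix.circulant w ((1 : Equiv.Perm (Fin (m + 2))) i) i = c ^ (m + 2) := by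
    have : ∀ i : Fin (m + 2), Matrix.circulant w ((1 : Equiv.Perm (Fin (m + 2))) i) i = c := by
      intro i
      simp [Matrix.circulant_apply, hw]
    rw [Finset.prod_congr rfl fun i _ => this i, Finset.prod_const, Finset.card_univ,
      Fintype.card_fin]
  have hrotprod : ∏ i : Fin (m + 2), Matrix.circulant w (finRotate (m + 2) i) i
      = δ ^ (m + 2) := by
    have : ∀ i : Fin (m + 2), Matrix.circulant w (finRotate (m + 2) i) i = δ := by
      intro i
      rw [Matrix.circulant_apply, finRotate_succ_apply, add_comm i 1, add_sub_cancel_right, hw]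
      simp [(one_ne_zero : (1 : Fin (m + 2)) ≠ 0)]
    rw [Finset.prod_congr rfl fun i _ => this i, Finset.prod_const, Finset.card_univ,
      Fintype.card_fin]
  rw [hid, hrotprod, Equiv.Perm.sign_one, sign_finRotate]
  push_cast
  rw [neg_pow δ]
  ring

/-- Determinant of the conditional PMF matrix of an edge in a perturbed symmetric
graphical model.  For `k ≥ 2` and reals `θ, θ'`, let `v : Fin k → ℝ` be
`v 0 = 1 − θ' − (k−2)θ`, `v 1 = θ'`, `v i = θ` otherwise.  Then
`(1 − kθ)·det(circulant v) = (1 − θ' − (k−1)θ)^k − (θ − θ')^k`; equivalently, writing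
`α = 1 − kθ` and `δ = θ' − θ`, if `α ≠ 0` then
`det(circulant v) = α^{k−1}·((1 − δ/α)^k − (−δ/α)^k)`. -/
theorem perturbed_symmetric_circulant_det (k : ℕ) (hk : 2 ≤ k) (θ θ' : ℝ) :
    let v : Fin k → ℝ := fun i =>
      if (i : ℕ) = 0 then 1 - θ' - ((k : ℝ) - 2) * θ
      else if (i : ℕ) = 1 then θ' else θ
    (1 - (k : ℝ) * θ) * (Matrix.circulant v).det
        = (1 - θ' - ((k : ℝ) - 1) * θ) ^ k - (θ - θ') ^ k ∧
    ((1 - (k : ℝ) * θ) ≠ 0 →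
      (Matrix.circulant v).det
        = (1 - (k : ℝ) * θ) ^ (k - 1) *
            ((1 - (θ' - θ) / (1 - (k : ℝ) * θ)) ^ k
              - (-((θ' - θ) / (1 - (k : ℝ) * θ))) ^ k)) := by
  intro v
  obtain ⟨m, rfl⟩ : ∃ m, k = m + 2 := ⟨k - 2, by omega⟩
  set c : ℝ := 1 - θ' - (((m + 2 : ℕ) : ℝ) - 1) * θ with hc
  set d : ℝ := θ' - θ with hd
  set a : ℝ := 1 - ((m + 2 : ℕ) : ℝ) * θ with ha
  set w : Fin (m + 2) → ℝ := fun i => if i = 0 then c else if i = 1 then d else 0 with hw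
  clear_value c d a
  -- relation between v and w
  have hvw : ∀ i : Fin (m + 2), v i = w i + θ := by
    intro i
    have h0 : ((i : ℕ) = 0) ↔ i = 0 := by
      rw [Fin.ext_iff, Fin.val_zero]
    have h1 : ((i : ℕ) = 1) ↔ i = 1 := by
      rw [Fin.ext_iff, Fin.val_one]
    simp only [v, hw, hc, hd]
    by_cases hi0 : (i : ℕ) = 0
    · rw [if_pos hi0, if_pos (h0.mp hi0)]
      push_cast; ring
    · rw [if_neg hi0, if_neg (fun h => hi0 (h0.mpr h))]
      by_cases hi1 : (i : ℕ) = 1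
      · rw [if_pos hi1, if_pos (h1.mp hi1)]; ring
      · rw [if_neg hi1, if_neg (fun h => hi1 (h1.mpr h))]; ring
  set M : Matrix (Fin (m + 2)) (Fin (m + 2)) ℝ := Matrix.circulant v with hM
  set N : Matrix (Fin (m + 2)) (Fin (m + 2)) ℝ := Matrix.circulant w with hN
  have hMN : ∀ i j, M i j = N i j + θ := fun i j => by
    rw [hM, hN, Matrix.circulant_apply, Matrix.circulant_apply]; exact hvw _
  -- column sums
  have hsumv : ∑ i : Fin (m + 2), v i = 1 := by
    rw [Fin.sum_univ_succ, Fin.sum_univ_succ]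
    have e0 : v 0 = 1 - θ' - (((m + 2 : ℕ) : ℝ) - 2) * θ := by
      simp [v]
    have e1 : v (Fin.succ 0) = θ' := by simp [v]
    have e2 : ∀ i : Fin m, v (Fin.succ (Fin.succ i)) = θ := by
      intro i; simp [v, Fin.val_succ]
    rw [e0, e1, Finset.sum_congr rfl fun i _ => e2 i, Finset.sum_const, Finset.card_univ,
      Fintype.card_fin, nsmul_eq_mul]
    push_cast; ring
  have hsumw : ∑ i : Fin (m + 2), w i = a := by
    rw [Fin.sum_univ_succ, Fin.sum_univ_succ]
    have e0 : w 0 = c := by simp [hw]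
    have e1 : w (Fin.succ 0) = d := by
      simp [hw, (one_ne_zero : (1 : Fin (m + 2)) ≠ 0).symm]
    have e2 : ∀ i : Fin m, w (Fin.succ (Fin.succ i)) = 0 := by
      intro i
      have h0 : (Fin.succ (Fin.succ i) : Fin (m + 2)) ≠ 0 := by
        rw [Ne, Fin.ext_iff]; simp [Fin.val_succ]
      have h1 : (Fin.succ (Fin.succ i) : Fin (m + 2)) ≠ 1 := by
        rw [Ne, Fin.ext_iff]; simp [Fin.val_succ, Fin.val_one]
      simp [hw, h0, h1]
    rw [e0, e1, Finset.sum_congr rfl fun i _ => e2 i, Finset.sum_const]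
    simp [hc, hd, ha]; push_cast; ring
  have hcolM : ∀ j, ∑ i, M i j = 1 := by
    intro j
    rw [hM]
    calc ∑ i, Matrix.circulant v i j = ∑ i, v (i - j) := by
          simp [Matrix.circulant_apply]
      _ = ∑ i, v i := Fintype.sum_equiv (Equiv.subRight j) _ _ fun i => rfl
      _ = 1 := hsumv
  have hcolN : ∀ j, ∑ i, N i j = a := by
    intro j
    rw [hN]
    calc ∑ i, Matrix.circulant w i j = ∑ i, w (i - j) := by
          simp [Matrix.circulant_apply]
      _ = ∑ i, w i := Fintype.sum_equiv (Equiv.subRight j) _ _ fun i => rfl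
      _ = a := hsumw
  -- the common matrix with first row all ones
  set B : Matrix (Fin (m + 2)) (Fin (m + 2)) ℝ := N.updateRow 0 (fun _ => 1) with hB
  have hNdet : N.det = a * B.det := by
    have h1 : (N.updateRow 0 (∑ i, (1 : ℝ) • N i)).det = (1 : ℝ) • N.det :=
      Matrix.det_updateRow_sum N 0 (fun _ => 1)
    have h2 : (∑ i, (1 : ℝ) • N i) = a • (fun _ => (1 : ℝ)) := by
      funext j
      rw [Finset.sum_apply]
      simpa using hcolN j
    rw [h2, Matrix.det_updateRow_smul] at h1
    simpa [hB] using h1.symm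
  have hMdet : M.det = B.det := by
    have h1 : (M.updateRow 0 (∑ i, (1 : ℝ) • M i)).det = (1 : ℝ) • M.det :=
      Matrix.det_updateRow_sum M 0 (fun _ => 1)
    have h2 : (∑ i, (1 : ℝ) • M i) = (fun _ => (1 : ℝ)) := by
      funext j
      rw [Finset.sum_apply]
      simpa using hcolM j
    rw [h2] at h1
    have h3 : (M.updateRow 0 (fun _ => 1)).det = B.det := by
      apply Matrix.det_eq_of_forall_row_eq_smul_add_const
        (fun i => if i = 0 then 0 else θ) 0 (if_pos rfl)
      intro i j
      by_cases hi : i = 0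
      · subst hi
        rw [Matrix.updateRow_self, if_pos rfl, hB, Matrix.updateRow_self]
        ring
      · rw [Matrix.updateRow_ne hi, if_neg hi, hB, Matrix.updateRow_ne hi,
          Matrix.updateRow_self, hMN]
        ring
    rw [h3] at h1
    simpa using h1.symm
  have hNval : N.det = c ^ (m + 2) - (-d) ^ (m + 2) := by
    rw [hN, hw]; exact det_circulant_step m c d
  have part1 : a * M.det = c ^ (m + 2) - (-d) ^ (m + 2) := by
    rw [hMdet, ← hNdet, hNval]
  constructor
  · have hDeq : (θ - θ') = -d := by rw [hd]; ring
    rw [hDeq]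
    exact part1
  · intro hα
    have hcad : c = a - d := by rw [hc, ha, hd]; push_cast; ring
    have hC2 : (1 : ℝ) - d / a = c / a := by
      rw [hcad, sub_div, div_self hα]
    have hD2 : -(d / a) = (-d) / a := (neg_div a d).symm
    rw [hC2, hD2, div_pow, div_pow, div_sub_div_same,
      show m + 2 - 1 = m + 1 from rfl]
    rw [eq_comm]
    field_simp
    linear_combination (-(a ^ (m + 1))) * part1
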